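/- For integers k and n ≥ 0 and 0 ≤ ℓ ≤ n, if g is a scalar modular form of weight k−n+2ℓ for Γ, then the Rankin–Cohen bracket [g, v̂_n]_{n−ℓ}^{(k−n+2ℓ, −n)} = Σ_{r=0}^{n−ℓ} (−1)^r C(k−n+2ℓ+(n−ℓ)−1, n−ℓ−r) C(−n+(n−ℓ)−1, r) g^{(r)} v̂_n^{(n−ℓ−r)} is a vector-valued modular form of weight k for Γ with respect to ρ_n; moreover the resulting linear map 𝒱_{k,n,ℓ} : M_{k−n+2ℓ}(Γ) → M̂_k^{n+1}(Γ, ρ_n) is injective. -/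

import Mathlib

open Matrix Complex Finset

abbrev SL2R := Matrix.SpecialLinearGroup (Fin 2) ℝ

noncomputable def Jf (γ : SL2R) (z : ℂ) : ℂ := (γ.1 1 0 : ℝ) * z + (γ.1 1 1 : ℝ)

noncomputable def actSL (γ : SL2R) (z : ℂ) : ℂ :=
  ((γ.1 0 0 : ℝ) * z + (γ.1 0 1 : ℝ)) / Jf γ z

/-- Generalized binomial coefficient C(a, r) = a(a−1)⋯(a−r+1)/r! for a ∈ ℤ. -/
noncomputable def gchoose (a : ℤ) (r : ℕ) : ℂ :=
  (∏ i ∈ Finset.range r, ((a : ℂ) - (i : ℂ))) / (r.factorial : ℂ)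

/-- The vector (z₁, z₂)^n. -/
def symVec (n : ℕ) (z₁ z₂ : ℂ) : Fin (n + 1) → ℂ :=
  fun i => z₁ ^ (n - (i : ℕ)) * z₂ ^ (i : ℕ)

/-- v̂_n(z) = (zⁿ, …, z, 1). -/
def vhat (n : ℕ) (z : ℂ) : Fin (n + 1) → ℂ := symVec n z 1

/-- Scalar modular form of weight k for Γ. -/
def IsMF (Γ : Subgroup SL2R) (k : ℤ) (f : ℂ → ℂ) : Prop :=
  DifferentiableOn ℂ f {z : ℂ | 0 < z.im} ∧
    ∀ γ ∈ Γ, ∀ z : ℂ, 0 < z.im → f (actSL γ z) = Jf γ z ^ k * f z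

/-- Vector-valued modular form of weight k for Γ with respect to a real
representation ρ. -/
def IsVVMF {n : ℕ} (Γ : Subgroup SL2R)
    (ρ : SL2R → Matrix (Fin (n + 1)) (Fin (n + 1)) ℝ) (k : ℤ)
    (f : ℂ → Fin (n + 1) → ℂ) : Prop :=
  DifferentiableOn ℂ f {z : ℂ | 0 < z.im} ∧
    ∀ γ ∈ Γ, ∀ z : ℂ, 0 < z.im →
      f (actSL γ z) = Jf γ z ^ k • ((ρ γ).map Complex.ofReal *ᵥ f z)

/-- The Rankin–Cohen bracket
[g, v̂_n]_{n−ℓ}^{(k−n+2ℓ, −n)}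
  = Σ_{r=0}^{n−ℓ} (−1)^r C(k−n+2ℓ+(n−ℓ)−1, n−ℓ−r) C(−n+(n−ℓ)−1, r)
      g⁽ʳ⁾ v̂_n^{(n−ℓ−r)}. -/
noncomputable def Vmap (n ℓ : ℕ) (k : ℤ) (g : ℂ → ℂ) (z : ℂ) : Fin (n + 1) → ℂ :=
  fun i => ∑ r ∈ Finset.range (n - ℓ + 1),
    (-1 : ℂ) ^ r * gchoose (k - n + 2 * ℓ + ((n - ℓ : ℕ) : ℤ) - 1) (n - ℓ - r) *
      gchoose (-(n : ℤ) + ((n - ℓ : ℕ) : ℤ) - 1) r *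
      iteratedDeriv r g z * iteratedDeriv (n - ℓ - r) (vhat n) z i

namespace RCAux

noncomputable section

def U : Set ℂ := {z : ℂ | 0 < z.im}

lemma isOpen_U : IsOpen U := by
  have : U = Complex.im ⁻¹' Set.Ioi 0 := rfl
  rw [this]
  exact isOpen_Ioi.preimage Complex.continuous_im

lemma det_eq (γ : SL2R) :
    (γ.1 0 0) * (γ.1 1 1) - (γ.1 0 1) * (γ.1 1 0) = 1 := by
  have h := γ.2
  rw [Matrix.det_fin_two] at h
  linarith

lemma Jf_ne_zero (γ : SL2R) {z : ℂ} (hz : z ∈ U) : Jf γ z ≠ 0 := by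
  have hzim : 0 < z.im := hz
  intro h
  have him : (γ.1 1 0 : ℝ) * z.im = 0 := by
    have := congrArg Complex.im h
    simpa [Jf] using this
  have hc : (γ.1 1 0 : ℝ) = 0 := by
    rcases mul_eq_zero.1 him with h' | h'
    · exact h'
    · exact absurd h' (ne_of_gt hzim)
  have hre : (γ.1 1 0 : ℝ) * z.re + (γ.1 1 1 : ℝ) = 0 := by
    have := congrArg Complex.re h
    simpa [Jf] using this
  have hd : (γ.1 1 1 : ℝ) = 0 := by rw [hc] at hre; linarith
  have hdet := det_eq γ
  rw [hc, hd] at hdet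
  simp at hdet

lemma im_actSL (γ : SL2R) (z : ℂ) :
    (actSL γ z).im = z.im / Complex.normSq (Jf γ z) := by
  have h := det_eq γ
  rw [actSL, Complex.div_im, div_sub_div_same]
  congr 1
  simp only [Jf, Complex.add_im, Complex.add_re, Complex.mul_im, Complex.mul_re,
    Complex.ofReal_re, Complex.ofReal_im]
  linear_combination z.im * h

lemma actSL_mem (γ : SL2R) {z : ℂ} (hz : z ∈ U) : actSL γ z ∈ U := by
  have hJ := Jf_ne_zero γ hz
  have hpos : 0 < Complex.normSq (Jf γ z) := Complex.normSq_pos.2 hJ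
  have : (actSL γ z).im = z.im / Complex.normSq (Jf γ z) := im_actSL γ z
  show 0 < (actSL γ z).im
  rw [this]
  exact div_pos hz hpos

lemma hasDerivAt_Jf (γ : SL2R) (z : ℂ) :
    HasDerivAt (Jf γ) (((γ.1 1 0 : ℝ) : ℂ)) z := by
  have h := ((hasDerivAt_id z).const_mul ((γ.1 1 0 : ℝ) : ℂ)).add_const ((γ.1 1 1 : ℝ) : ℂ)
  unfold Jf; simpa only [id, mul_one] using h

lemma hasDerivAt_actSL (γ : SL2R) {z : ℂ} (hz : z ∈ U) :
    HasDerivAt (actSL γ) (Jf γ z ^ (-2 : ℤ)) z := by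
  have hJ := Jf_ne_zero γ hz
  have hnum : HasDerivAt (fun z : ℂ => ((γ.1 0 0 : ℝ) : ℂ) * z + ((γ.1 0 1 : ℝ) : ℂ))
      ((γ.1 0 0 : ℝ) : ℂ) z := by
    simpa [mul_one] using
      ((hasDerivAt_id z).const_mul ((γ.1 0 0 : ℝ) : ℂ)).add_const ((γ.1 0 1 : ℝ) : ℂ)
  have h := hnum.div (hasDerivAt_Jf γ z) hJ
  have h1 : ((γ.1 0 0 : ℝ) : ℂ) * Jf γ z -
      (((γ.1 0 0 : ℝ) : ℂ) * z + ((γ.1 0 1 : ℝ) : ℂ)) * ((γ.1 1 0 : ℝ) : ℂ) = 1 := by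
    have hdet := det_eq γ
    have hdC : ((γ.1 0 0 : ℝ) : ℂ) * ((γ.1 1 1 : ℝ) : ℂ)
        - ((γ.1 0 1 : ℝ) : ℂ) * ((γ.1 1 0 : ℝ) : ℂ) = 1 := by
      exact_mod_cast congrArg (fun t : ℝ => (t : ℂ)) hdet
    simp only [Jf]
    linear_combination hdC
  rw [h1] at h
  have h2 : (1 : ℂ) / Jf γ z ^ 2 = Jf γ z ^ (-2 : ℤ) := by
    rw [one_div, ← zpow_natCast (Jf γ z) 2, ← _root_.zpow_neg]
    norm_num
  rw [h2] at h
  exact h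

/-! ### falling factorials -/

def FF (a : ℤ) (p : ℕ) : ℂ := ∏ i ∈ Finset.range p, ((a : ℂ) - (i : ℂ))

lemma gchoose_eq (a : ℤ) (p : ℕ) : gchoose a p = FF a p / (p.factorial : ℂ) := rfl

lemma FF_zero (a : ℤ) : FF a 0 = 1 := by simp [FF]

lemma FF_succ (a : ℤ) (p : ℕ) : FF a (p + 1) = FF a p * ((a : ℂ) - p) :=
  Finset.prod_range_succ _ _

lemma FF_succ' (a : ℤ) (p : ℕ) : FF a (p + 1) = (a : ℂ) * FF (a - 1) p := by
  rw [FF, Finset.prod_range_succ', mul_comm]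
  congr 1
  · norm_num
  · rw [FF]
    apply Finset.prod_congr rfl
    intro i _
    push_cast
    ring

lemma FF_add (a : ℤ) (p q : ℕ) : FF a (p + q) = FF a p * FF (a - p) q := by
  rw [FF, Finset.prod_range_add]
  congr 1
  apply Finset.prod_congr rfl
  intro i _
  push_cast
  ring

lemma FF_ne_zero {a : ℤ} {p : ℕ} (h : ∀ i : ℕ, i < p → a ≠ (i : ℤ)) : FF a p ≠ 0 := by
  rw [FF]
  apply Finset.prod_ne_zero_iff.2
  intro i hi
  have hai := h i (Finset.mem_range.1 hi)
  intro hEq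
  apply hai
  have h2 : (a : ℂ) = ((i : ℕ) : ℂ) := sub_eq_zero.1 hEq
  exact_mod_cast h2

lemma FF_nat_zero {j p : ℕ} (h : j < p) : FF (j : ℤ) p = 0 := by
  apply Finset.prod_eq_zero (Finset.mem_range.2 h)
  push_cast
  ring

lemma fact_ne (x : ℕ) : (x.factorial : ℂ) ≠ 0 :=
  Nat.cast_ne_zero.2 (Nat.factorial_ne_zero x)

lemma gchoose_ne_zero {a : ℤ} {p : ℕ} (h : ∀ i : ℕ, i < p → a ≠ (i : ℤ)) :
    gchoose a p ≠ 0 :=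
  div_ne_zero (FF_ne_zero h) (fact_ne p)

/-! ### coefficients of the derivative transformation law -/

def Acoef (w : ℤ) (r j : ℕ) : ℂ :=
  (r.factorial : ℂ) / (j.factorial : ℂ) * gchoose (w + r - 1) (r - j)

lemma Acoef_diag (w : ℤ) (r : ℕ) : Acoef w r r = 1 := by
  simp [Acoef, gchoose_eq, Nat.sub_self, FF_zero, div_self (fact_ne r)]

lemma Acoef_zero_succ (w : ℤ) (r : ℕ) :
    Acoef w (r + 1) 0 = ((w : ℂ) + r) * Acoef w r 0 := by
  simp only [Acoef, gchoose_eq, Nat.sub_zero]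
  rw [show (w + ((r + 1 : ℕ) : ℤ) - 1) = (w + (r : ℕ) - 1) + 1 from by push_cast; ring]
  have h2 : FF (w + (r : ℕ) - 1 + 1) (r + 1) = ((w : ℂ) + r) * FF (w + (r : ℕ) - 1) r := by
    rw [FF_succ']
    congr 1
    · push_cast; ring
    · congr 1; ring
  rw [h2]
  have hf := fact_ne r
  have hf0 := fact_ne 0
  have hf1 := fact_ne (r + 1)
  rw [Nat.factorial_succ]
  have h5 : ((r : ℂ) + 1) ≠ 0 := by exact_mod_cast (Nat.cast_add_one_ne_zero r : ((r : ℂ) + 1) ≠ 0)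
  push_cast
  field_simp

lemma Acoef_rec (w : ℤ) (r j : ℕ) (hj : j + 1 ≤ r) :
    Acoef w (r + 1) (j + 1) =
      ((w : ℂ) + r + ((j : ℂ) + 1)) * Acoef w r (j + 1) + Acoef w r j := by
  obtain ⟨p, rfl⟩ : ∃ p, r = j + 1 + p := ⟨r - (j + 1), by omega⟩
  simp only [Acoef, gchoose_eq]
  rw [show (j + 1 + p + 1) - (j + 1) = p + 1 from by omega,
    show (j + 1 + p) - (j + 1) = p from by omega,
    show (j + 1 + p) - j = p + 1 from by omega]
  rw [show (w + ((j + 1 + p + 1 : ℕ) : ℤ) - 1) = (w + (j + 1 + p : ℕ)) from by push_cast; ring]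
  rw [show (w + ((j + 1 + p : ℕ) : ℤ) - 1) = (w + (j + 1 + p : ℕ)) - 1 from by push_cast; ring]
  rw [FF_succ' (w + (j + 1 + p : ℕ)) p, FF_succ (w + (j + 1 + p : ℕ) - 1) p]
  rw [Nat.factorial_succ (j + 1 + p), Nat.factorial_succ p, Nat.factorial_succ j]
  have h1 := fact_ne p
  have h2 := fact_ne j
  have h3 := fact_ne (j + 1 + p)
  have h5 : ((j : ℂ) + 1) ≠ 0 := Nat.cast_add_one_ne_zero j
  have h6 : ((p : ℂ) + 1) ≠ 0 := Nat.cast_add_one_ne_zero p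
  push_cast
  field_simp
  ring

/-! ### iterated derivatives of holomorphic functions -/

lemma diffOn_iter {f : ℂ → ℂ} (hf : DifferentiableOn ℂ f U) (r : ℕ) :
    DifferentiableOn ℂ (iteratedDeriv r f) U := by
  induction r with
  | zero => simpa using hf
  | succ r ih =>
    rw [iteratedDeriv_succ]
    exact ((ih.analyticOnNhd isOpen_U).deriv).differentiableOn

lemma hasDerivAt_iter {f : ℂ → ℂ} (hf : DifferentiableOn ℂ f U) (r : ℕ) {z : ℂ}
    (hz : z ∈ U) :
    HasDerivAt (iteratedDeriv r f) (iteratedDeriv (r + 1) f z) z := by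
  have h := (diffOn_iter hf r).differentiableAt (isOpen_U.mem_nhds hz)
  have := h.hasDerivAt
  rwa [← iteratedDeriv_succ] at this

lemma sum_step (T S0 S1 : ℕ → ℂ) (r : ℕ)
    (h0 : T 0 = S0 0) (htop : T (r + 1) = S1 r)
    (hmid : ∀ j, j < r → T (j + 1) = S0 (j + 1) + S1 j) :
    ∑ j ∈ Finset.range (r + 1 + 1), T j = ∑ j ∈ Finset.range (r + 1), (S0 j + S1 j) := by
  rw [Finset.sum_add_distrib]
  rw [Finset.sum_range_succ' T (r + 1)]
  rw [Finset.sum_range_succ (fun j => T (j + 1)) r]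
  rw [Finset.sum_range_succ' S0 r]
  rw [Finset.sum_range_succ S1 r]
  rw [h0, htop]
  rw [Finset.sum_congr rfl (fun j hj => hmid j (Finset.mem_range.1 hj))]
  rw [Finset.sum_add_distrib]
  ring

/-! ### transformation law for iterated derivatives -/

lemma derivTrans (γ : SL2R) (w : ℤ) (F G : ℂ → ℂ)
    (hF : DifferentiableOn ℂ F U) (hG : DifferentiableOn ℂ G U)
    (h : ∀ z ∈ U, F (actSL γ z) = Jf γ z ^ w * G z) :
    ∀ r : ℕ, ∀ z ∈ U, iteratedDeriv r F (actSL γ z) =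
      ∑ j ∈ Finset.range (r + 1),
        Acoef w r j * ((γ.1 1 0 : ℝ) : ℂ) ^ (r - j) * Jf γ z ^ (w + r + j) *
          iteratedDeriv j G z := by
  intro r
  induction r with
  | zero =>
    intro z hz
    simpa [Finset.sum_range_one, Acoef_diag] using h z hz
  | succ r ih =>
    intro z hz
    have hJ := Jf_ne_zero γ hz
    have hA := actSL_mem γ hz
    -- derivative of the left-hand side
    have hL : HasDerivAt (fun z => iteratedDeriv r F (actSL γ z))
        (iteratedDeriv (r + 1) F (actSL γ z) * Jf γ z ^ (-2 : ℤ)) z := by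
      have h1 : HasDerivAt (iteratedDeriv r F) (iteratedDeriv (r + 1) F (actSL γ z))
          (actSL γ z) := hasDerivAt_iter hF r hA
      exact h1.comp z (hasDerivAt_actSL γ hz)
    -- derivative of the right-hand side
    have hR : HasDerivAt (fun z => ∑ j ∈ Finset.range (r + 1),
        Acoef w r j * ((γ.1 1 0 : ℝ) : ℂ) ^ (r - j) * Jf γ z ^ (w + r + j) *
          iteratedDeriv j G z)
        (∑ j ∈ Finset.range (r + 1),
          (Acoef w r j * ((γ.1 1 0 : ℝ) : ℂ) ^ (r - j) *
              (((w + r + j : ℤ) : ℂ) * Jf γ z ^ (w + r + j - 1) * ((γ.1 1 0 : ℝ) : ℂ)) *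
              iteratedDeriv j G z +
            Acoef w r j * ((γ.1 1 0 : ℝ) : ℂ) ^ (r - j) * Jf γ z ^ (w + r + j) *
              iteratedDeriv (j + 1) G z)) z := by
      apply HasDerivAt.fun_sum
      intro j _
      have hzpow : HasDerivAt (fun z => Jf γ z ^ (w + r + j))
          (((w + r + j : ℤ) : ℂ) * Jf γ z ^ (w + r + j - 1) * ((γ.1 1 0 : ℝ) : ℂ)) z := by
        have := (hasDerivAt_zpow (w + r + j) (Jf γ z) (Or.inl hJ)).comp z (hasDerivAt_Jf γ z)
        exact this
      have hGj : HasDerivAt (iteratedDeriv j G) (iteratedDeriv (j + 1) G z) z :=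
        hasDerivAt_iter hG j hz
      have hq := (hzpow.const_mul
          (Acoef w r j * ((γ.1 1 0 : ℝ) : ℂ) ^ (r - j))).mul hGj
      exact hq
    -- the two functions agree near z, so derivatives agree
    have hEq : (fun z => iteratedDeriv r F (actSL γ z)) =ᶠ[nhds z]
        (fun z => ∑ j ∈ Finset.range (r + 1),
          Acoef w r j * ((γ.1 1 0 : ℝ) : ℂ) ^ (r - j) * Jf γ z ^ (w + r + j) *
            iteratedDeriv j G z) :=
      Filter.eventuallyEq_of_mem (isOpen_U.mem_nhds hz) (fun z' hz' => ih z' hz')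
    have hDer : iteratedDeriv (r + 1) F (actSL γ z) * Jf γ z ^ (-2 : ℤ)
        = ∑ j ∈ Finset.range (r + 1),
          (Acoef w r j * ((γ.1 1 0 : ℝ) : ℂ) ^ (r - j) *
              (((w + r + j : ℤ) : ℂ) * Jf γ z ^ (w + r + j - 1) * ((γ.1 1 0 : ℝ) : ℂ)) *
              iteratedDeriv j G z +
            Acoef w r j * ((γ.1 1 0 : ℝ) : ℂ) ^ (r - j) * Jf γ z ^ (w + r + j) *
              iteratedDeriv (j + 1) G z) := by
      rw [← hL.deriv, ← hR.deriv]
      exact hEq.deriv_eq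
    have hsq : Jf γ z ^ (-2 : ℤ) * Jf γ z ^ (2 : ℤ) = 1 := by
      rw [← zpow_add₀ hJ]
      norm_num
    have hkey : iteratedDeriv (r + 1) F (actSL γ z)
        = (∑ j ∈ Finset.range (r + 1),
          (Acoef w r j * ((γ.1 1 0 : ℝ) : ℂ) ^ (r - j) *
              (((w + r + j : ℤ) : ℂ) * Jf γ z ^ (w + r + j - 1) * ((γ.1 1 0 : ℝ) : ℂ)) *
              iteratedDeriv j G z +
            Acoef w r j * ((γ.1 1 0 : ℝ) : ℂ) ^ (r - j) * Jf γ z ^ (w + r + j) *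
              iteratedDeriv (j + 1) G z)) * Jf γ z ^ (2 : ℤ) := by
      calc iteratedDeriv (r + 1) F (actSL γ z)
          = iteratedDeriv (r + 1) F (actSL γ z) * (Jf γ z ^ (-2 : ℤ) * Jf γ z ^ (2 : ℤ)) := by
            rw [hsq, mul_one]
        _ = (iteratedDeriv (r + 1) F (actSL γ z) * Jf γ z ^ (-2 : ℤ)) * Jf γ z ^ (2 : ℤ) := by
            ring
        _ = _ := by rw [hDer]
    rw [hkey, Finset.sum_mul]
    -- termwise distribution of J^2
    have hterm : ∀ j ∈ Finset.range (r + 1),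
        (Acoef w r j * ((γ.1 1 0 : ℝ) : ℂ) ^ (r - j) *
              (((w + r + j : ℤ) : ℂ) * Jf γ z ^ (w + r + j - 1) * ((γ.1 1 0 : ℝ) : ℂ)) *
              iteratedDeriv j G z +
            Acoef w r j * ((γ.1 1 0 : ℝ) : ℂ) ^ (r - j) * Jf γ z ^ (w + r + j) *
              iteratedDeriv (j + 1) G z) * Jf γ z ^ (2 : ℤ)
          = ((w + r + j : ℤ) : ℂ) * Acoef w r j * ((γ.1 1 0 : ℝ) : ℂ) ^ (r + 1 - j) *
              Jf γ z ^ (w + r + j + 1) * iteratedDeriv j G z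
            + Acoef w r j * ((γ.1 1 0 : ℝ) : ℂ) ^ (r - j) * Jf γ z ^ (w + r + j + 2) *
              iteratedDeriv (j + 1) G z := by
      intro j hj
      have hj' : j ≤ r := by have := Finset.mem_range.1 hj; omega
      have e1 : Jf γ z ^ (w + r + j + 1) = Jf γ z ^ (w + r + j - 1) * Jf γ z ^ (2 : ℤ) := by
        rw [← zpow_add₀ hJ]; ring_nf
      have e2 : Jf γ z ^ (w + r + j + 2) = Jf γ z ^ (w + r + j) * Jf γ z ^ (2 : ℤ) := by
        rw [← zpow_add₀ hJ]
      have e3 : ((γ.1 1 0 : ℝ) : ℂ) ^ (r + 1 - j)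
          = ((γ.1 1 0 : ℝ) : ℂ) ^ (r - j) * ((γ.1 1 0 : ℝ) : ℂ) := by
        rw [← pow_succ]
        congr 1
        omega
      rw [e1, e2, e3]
      ring
    rw [Finset.sum_congr rfl hterm]
    refine (sum_step
      (fun j => Acoef w (r + 1) j * ((γ.1 1 0 : ℝ) : ℂ) ^ (r + 1 - j) *
        Jf γ z ^ (w + ((r + 1 : ℕ) : ℤ) + (j : ℤ)) * iteratedDeriv j G z)
      (fun j => ((w + (r : ℕ) + (j : ℕ) : ℤ) : ℂ) * Acoef w r j *
        ((γ.1 1 0 : ℝ) : ℂ) ^ (r + 1 - j) * Jf γ z ^ (w + (r : ℕ) + (j : ℕ) + 1) *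
        iteratedDeriv j G z)
      (fun j => Acoef w r j * ((γ.1 1 0 : ℝ) : ℂ) ^ (r - j) *
        Jf γ z ^ (w + (r : ℕ) + (j : ℕ) + 2) * iteratedDeriv (j + 1) G z)
      r ?_ ?_ ?_).symm
    · -- T 0 = S0 0
      show Acoef w (r + 1) 0 * ((γ.1 1 0 : ℝ) : ℂ) ^ (r + 1 - 0) *
          Jf γ z ^ (w + ((r + 1 : ℕ) : ℤ) + ((0 : ℕ) : ℤ)) * iteratedDeriv 0 G z
        = ((w + (r : ℕ) + ((0 : ℕ) : ℤ) : ℤ) : ℂ) * Acoef w r 0 *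
          ((γ.1 1 0 : ℝ) : ℂ) ^ (r + 1 - 0) * Jf γ z ^ (w + (r : ℕ) + ((0 : ℕ) : ℤ) + 1) *
          iteratedDeriv 0 G z
      rw [Acoef_zero_succ]
      rw [show (w + ((r + 1 : ℕ) : ℤ) + ((0 : ℕ) : ℤ)) = w + ((r : ℕ) : ℤ) + ((0 : ℕ) : ℤ) + 1
        from by push_cast; ring]
      rw [show ((w + (r : ℕ) + ((0 : ℕ) : ℤ) : ℤ) : ℂ) = (w : ℂ) + r from by push_cast; ring]
    · -- T (r+1) = S1 r
      show Acoef w (r + 1) (r + 1) * ((γ.1 1 0 : ℝ) : ℂ) ^ (r + 1 - (r + 1)) *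
          Jf γ z ^ (w + ((r + 1 : ℕ) : ℤ) + (((r + 1 : ℕ) : ℕ) : ℤ)) * iteratedDeriv (r + 1) G z
        = Acoef w r r * ((γ.1 1 0 : ℝ) : ℂ) ^ (r - r) *
          Jf γ z ^ (w + (r : ℕ) + ((r : ℕ) : ℤ) + 2) * iteratedDeriv (r + 1) G z
      rw [Acoef_diag, Acoef_diag]
      rw [show (w + ((r + 1 : ℕ) : ℤ) + (((r + 1 : ℕ) : ℕ) : ℤ))
          = w + ((r : ℕ) : ℤ) + ((r : ℕ) : ℤ) + 2 from by push_cast; ring]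
      rw [Nat.sub_self, Nat.sub_self]
    · -- middle
      intro j hjr
      show Acoef w (r + 1) (j + 1) * ((γ.1 1 0 : ℝ) : ℂ) ^ (r + 1 - (j + 1)) *
          Jf γ z ^ (w + ((r + 1 : ℕ) : ℤ) + (((j + 1 : ℕ) : ℕ) : ℤ)) * iteratedDeriv (j + 1) G z
        = ((w + (r : ℕ) + (((j + 1 : ℕ) : ℕ) : ℤ) : ℤ) : ℂ) * Acoef w r (j + 1) *
            ((γ.1 1 0 : ℝ) : ℂ) ^ (r + 1 - (j + 1)) *
            Jf γ z ^ (w + (r : ℕ) + (((j + 1 : ℕ) : ℕ) : ℤ) + 1) * iteratedDeriv (j + 1) G z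
          + Acoef w r j * ((γ.1 1 0 : ℝ) : ℂ) ^ (r - j) *
            Jf γ z ^ (w + (r : ℕ) + ((j : ℕ) : ℤ) + 2) * iteratedDeriv (j + 1) G z
      have hj' : j + 1 ≤ r := hjr
      rw [Acoef_rec w r j hj']
      rw [show (w + ((r + 1 : ℕ) : ℤ) + (((j + 1 : ℕ) : ℕ) : ℤ))
          = w + ((r : ℕ) : ℤ) + ((j : ℕ) : ℤ) + 2 from by push_cast; ring]
      rw [show (w + ((r : ℕ) : ℤ) + (((j + 1 : ℕ) : ℕ) : ℤ) + 1)
          = w + ((r : ℕ) : ℤ) + ((j : ℕ) : ℤ) + 2 from by push_cast; ring]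
      rw [show ((w + (r : ℕ) + (((j + 1 : ℕ) : ℕ) : ℤ) : ℤ) : ℂ) = (w : ℂ) + r + ((j : ℂ) + 1)
        from by push_cast; ring]
      rw [show r + 1 - (j + 1) = r - j from by omega]
      ring

/-! ### iterated derivatives of vhat -/

lemma vhat_comp (n : ℕ) (i : Fin (n + 1)) :
    (fun z : ℂ => vhat n z i) = fun z : ℂ => z ^ (n - (i : ℕ)) := by
  funext z; simp [vhat, symVec]

lemma iterDeriv_pow (p q : ℕ) (z : ℂ) :
    iteratedDeriv q (fun z : ℂ => z ^ p) z = FF (p : ℤ) q * z ^ (p - q) := by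
  rw [iteratedDeriv_eq_iterate, iter_deriv_pow, FF]
  norm_cast

lemma monomial_step (p q : ℕ) (z : ℂ) :
    FF (p : ℤ) q * (((p - q : ℕ) : ℂ) * z ^ (p - q - 1)) =
      FF (p : ℤ) (q + 1) * z ^ (p - (q + 1)) := by
  rcases lt_or_ge q p with h | h
  · have hc : ((p - q : ℕ) : ℂ) = (p : ℂ) - q := by
      push_cast [Nat.cast_sub h.le]
      ring
    rw [FF_succ, hc, show p - q - 1 = p - (q + 1) from by omega]
    push_cast
    ring
  · rw [FF_nat_zero (show p < q + 1 from by omega), show p - q = 0 from by omega]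
    simp

lemma iterDeriv_vhat (n q : ℕ) (z : ℂ) (i : Fin (n + 1)) :
    iteratedDeriv q (vhat n) z i
      = FF ((n - (i : ℕ) : ℕ) : ℤ) q * z ^ (n - (i : ℕ) - q) := by
  induction q generalizing z i with
  | zero => simp [vhat, symVec, FF_zero]
  | succ q ih =>
    rw [iteratedDeriv_succ]
    have hD : HasDerivAt (iteratedDeriv q (vhat n))
        (fun i : Fin (n + 1) => FF ((n - (i : ℕ) : ℕ) : ℤ) q *
          (((n - (i : ℕ) - q : ℕ) : ℂ) * z ^ (n - (i : ℕ) - q - 1))) z := by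
      rw [hasDerivAt_pi]
      intro i
      have hfun : (fun x : ℂ => iteratedDeriv q (vhat n) x i)
          = fun x : ℂ => FF ((n - (i : ℕ) : ℕ) : ℤ) q * x ^ (n - (i : ℕ) - q) := by
        funext x; exact ih x i
      rw [hfun]
      exact (hasDerivAt_pow _ z).const_mul _
    rw [hD.deriv]
    exact monomial_step (n - (i : ℕ)) q z

lemma iterDeriv_vhat_comp (n q : ℕ) (z : ℂ) (i : Fin (n + 1)) :
    iteratedDeriv q (fun w => vhat n w i) z = iteratedDeriv q (vhat n) z i := by
  rw [vhat_comp, iterDeriv_pow, iterDeriv_vhat]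

lemma iterDeriv_mulVec (n q : ℕ) (R : Matrix (Fin (n + 1)) (Fin (n + 1)) ℂ)
    (i : Fin (n + 1)) (z : ℂ) :
    iteratedDeriv q (fun z => (R *ᵥ vhat n z) i) z
      = (R *ᵥ iteratedDeriv q (vhat n) z) i := by
  have hfun : (fun z : ℂ => (R *ᵥ vhat n z) i)
      = fun z : ℂ => ∑ p : Fin (n + 1), R i p * z ^ (n - (p : ℕ)) := by
    funext z
    simp [Matrix.mulVec, dotProduct, vhat, symVec]
  have key : ∀ q, ∀ z : ℂ,
      iteratedDeriv q (fun z : ℂ => ∑ p : Fin (n + 1), R i p * z ^ (n - (p : ℕ))) z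
        = ∑ p : Fin (n + 1), R i p * FF ((n - (p : ℕ) : ℕ) : ℤ) q * z ^ (n - (p : ℕ) - q) := by
    intro q
    induction q with
    | zero => intro z; simp [FF_zero]
    | succ q ih =>
      intro z
      rw [iteratedDeriv_succ]
      have hfun2 : iteratedDeriv q (fun z : ℂ => ∑ p : Fin (n + 1), R i p * z ^ (n - (p : ℕ)))
          = fun z : ℂ => ∑ p : Fin (n + 1),
              R i p * FF ((n - (p : ℕ) : ℕ) : ℤ) q * z ^ (n - (p : ℕ) - q) := funext ih
      rw [hfun2]
      have hD : HasDerivAt (fun z : ℂ => ∑ p : Fin (n + 1),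
            R i p * FF ((n - (p : ℕ) : ℕ) : ℤ) q * z ^ (n - (p : ℕ) - q))
          (∑ p : Fin (n + 1), R i p * FF ((n - (p : ℕ) : ℕ) : ℤ) q *
            (((n - (p : ℕ) - q : ℕ) : ℂ) * z ^ (n - (p : ℕ) - q - 1))) z := by
        apply HasDerivAt.fun_sum
        intro p _
        exact (hasDerivAt_pow _ z).const_mul _
      rw [hD.deriv]
      apply Finset.sum_congr rfl
      intro p _
      rw [mul_assoc, mul_assoc]
      exact congrArg _ (monomial_step (n - (p : ℕ)) q z)
  rw [hfun, key q z]
  simp [Matrix.mulVec, dotProduct, iterDeriv_vhat, mul_assoc]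

/-! ### the alternating sum -/

lemma altsum (M : ℕ) :
    ∑ s ∈ Finset.range (M + 1),
        (-1 : ℂ) ^ s * (((s.factorial * (M - s).factorial : ℕ) : ℂ))⁻¹
      = if M = 0 then 1 else 0 := by
  have key : ∀ s ∈ Finset.range (M + 1),
      (-1 : ℂ) ^ s * (((s.factorial * (M - s).factorial : ℕ) : ℂ))⁻¹
        = ((-1 : ℂ) ^ s * (M.choose s)) / (M.factorial : ℂ) := by
    intro s hs
    have hs' : s ≤ M := by
      have := Finset.mem_range.1 hs; omega
    have h := Nat.choose_mul_factorial_mul_factorial hs'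
    have h2 : (M.choose s : ℂ) * ((s.factorial * (M - s).factorial : ℕ) : ℂ)
        = (M.factorial : ℂ) := by
      exact_mod_cast congrArg (fun t : ℕ => (t : ℂ)) (by rw [← h]; ring)
    have hX : (((s.factorial * (M - s).factorial : ℕ) : ℂ)) ≠ 0 := by
      rw [Nat.cast_mul]
      exact mul_ne_zero (fact_ne s) (fact_ne (M - s))
    have hinv : (((s.factorial * (M - s).factorial : ℕ) : ℂ))⁻¹
        = (M.choose s : ℂ) / (M.factorial : ℂ) := by
      rw [eq_div_iff (fact_ne M), ← h2, mul_comm ((M.choose s : ℂ)) _, ← mul_assoc,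
        inv_mul_cancel₀ hX, one_mul]
    rw [hinv]
    ring
  rw [Finset.sum_congr rfl key, ← Finset.sum_div]
  have h3 : ∑ s ∈ Finset.range (M + 1), ((-1 : ℂ) ^ s * (M.choose s))
      = ((if M = 0 then 1 else 0 : ℤ) : ℂ) := by
    rw [← Int.alternating_sum_range_choose]
    push_cast
    rfl
  rw [h3]
  split
  · next h => subst h; norm_num
  · norm_num

lemma mulVec_sum_comm {NN : ℕ} (R : Matrix (Fin NN) (Fin NN) ℂ) (i : Fin NN)
    (s : Finset ℕ) (a : ℕ → ℂ) (v : ℕ → Fin NN → ℂ) :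
    (R *ᵥ (fun p => ∑ j ∈ s, a j * v j p)) i = ∑ j ∈ s, a j * (R *ᵥ v j) i := by
  have h1 : ∀ p, R i p * (∑ j ∈ s, a j * v j p) = ∑ j ∈ s, a j * (R i p * v j p) := by
    intro p
    rw [Finset.mul_sum]
    exact Finset.sum_congr rfl fun j _ => by ring
  simp only [Matrix.mulVec, dotProduct]
  rw [Finset.sum_congr rfl fun p _ => h1 p, Finset.sum_comm]
  exact Finset.sum_congr rfl fun j _ => (Finset.mul_sum _ _ _).symm

lemma inner_collapse (m j q : ℕ) (K : ℂ) (hjq : j + q ≤ m) :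
    ∑ r ∈ Finset.Ico j (m - q + 1), (-1 : ℂ) ^ r *
        ((j.factorial * q.factorial * (r - j).factorial * (m - r - q).factorial : ℕ) : ℂ)⁻¹ * K
      = (-1 : ℂ) ^ j * ((j.factorial * q.factorial : ℕ) : ℂ)⁻¹ *
          (if m - j - q = 0 then 1 else 0) * K := by
  rw [Finset.sum_Ico_eq_sum_range]
  rw [show m - q + 1 - j = (m - j - q) + 1 from by omega]
  have hterm : ∀ s ∈ Finset.range ((m - j - q) + 1),
      (-1 : ℂ) ^ (j + s) *
          ((j.factorial * q.factorial * ((j + s) - j).factorial *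
            (m - (j + s) - q).factorial : ℕ) : ℂ)⁻¹ * K
        = ((-1 : ℂ) ^ j * ((j.factorial * q.factorial : ℕ) : ℂ)⁻¹ * K) *
            ((-1 : ℂ) ^ s * (((s.factorial * ((m - j - q) - s).factorial : ℕ) : ℂ))⁻¹) := by
    intro s hs
    rw [show (j + s) - j = s from by omega,
      show m - (j + s) - q = (m - j - q) - s from by omega, pow_add]
    push_cast
    ring
  rw [Finset.sum_congr rfl hterm, ← Finset.mul_sum, altsum]
  ring

/-! ### the main covariance computation -/

set_option maxHeartbeats 1000000 in
lemma main_component (ℓ m : ℕ) (k : ℤ) (γ : SL2R) (g : ℂ → ℂ)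
    (hg : DifferentiableOn ℂ g U)
    (hgt : ∀ z ∈ U, g (actSL γ z) = Jf γ z ^ (k - ((ℓ + m : ℕ) : ℤ) + 2 * (ℓ : ℤ)) * g z)
    (R : Matrix (Fin (ℓ + m + 1)) (Fin (ℓ + m + 1)) ℂ)
    (hR : ∀ z ∈ U, ∀ i, vhat (ℓ + m) (actSL γ z) i
        = Jf γ z ^ (-((ℓ + m : ℕ) : ℤ)) * (R *ᵥ vhat (ℓ + m) z) i)
    {z : ℂ} (hz : z ∈ U) :
    Vmap (ℓ + m) ℓ k g (actSL γ z) = Jf γ z ^ k • (R *ᵥ Vmap (ℓ + m) ℓ k g z) := by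
  have hJ := Jf_ne_zero γ hz
  have hA := actSL_mem γ hz
  have hgr := derivTrans γ (k - ((ℓ + m : ℕ) : ℤ) + 2 * (ℓ : ℤ)) g g hg hg hgt
  funext i
  have hFdiff : DifferentiableOn ℂ (fun w => vhat (ℓ + m) w i) U := by
    rw [vhat_comp]
    exact (differentiable_pow _).differentiableOn
  have hGdiff : DifferentiableOn ℂ (fun z => (R *ᵥ vhat (ℓ + m) z) i) U := by
    have hfn : (fun z : ℂ => (R *ᵥ vhat (ℓ + m) z) i)
        = fun z : ℂ => ∑ p : Fin (ℓ + m + 1), R i p * z ^ ((ℓ + m) - (p : ℕ)) := by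
      funext z
      simp [Matrix.mulVec, dotProduct, vhat, symVec]
    rw [hfn]
    apply Differentiable.differentiableOn
    apply Differentiable.fun_sum
    intro p _
    exact (differentiable_pow _).const_mul _
  have hvr0 := derivTrans γ (-((ℓ + m : ℕ) : ℤ)) (fun w => vhat (ℓ + m) w i)
    (fun z => (R *ᵥ vhat (ℓ + m) z) i) hFdiff hGdiff (fun z hz => hR z hz i)
  have hvr : ∀ s : ℕ, iteratedDeriv s (vhat (ℓ + m)) (actSL γ z) i
      = ∑ q ∈ Finset.range (s + 1),
          Acoef (-((ℓ + m : ℕ) : ℤ)) s q * ((γ.1 1 0 : ℝ) : ℂ) ^ (s - q) *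
            Jf γ z ^ ((-((ℓ + m : ℕ) : ℤ)) + (s : ℤ) + (q : ℤ)) *
            (R *ᵥ iteratedDeriv q (vhat (ℓ + m)) z) i := by
    intro s
    rw [← iterDeriv_vhat_comp]
    rw [hvr0 s z hz]
    exact Finset.sum_congr rfl fun q _ => by rw [iterDeriv_mulVec]
  have hVeq : Vmap (ℓ + m) ℓ k g z = fun p => ∑ j ∈ Finset.range (m + 1),
      ((-1 : ℂ) ^ j * gchoose (k - ((ℓ + m : ℕ) : ℤ) + 2 * (ℓ : ℤ) + (m : ℤ) - 1) (m - j) * gchoose (-((ℓ + m : ℕ) : ℤ) + (m : ℤ) - 1) j * iteratedDeriv j g z) *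
        iteratedDeriv (m - j) (vhat (ℓ + m)) z p := by
    funext p
    simp only [Vmap, Nat.add_sub_cancel_left]
  have hLHS : Vmap (ℓ + m) ℓ k g (actSL γ z) i
      = ∑ r ∈ Finset.range (m + 1),
          ((-1 : ℂ) ^ r * gchoose (k - ((ℓ + m : ℕ) : ℤ) + 2 * (ℓ : ℤ) + (m : ℤ) - 1) (m - r) * gchoose (-((ℓ + m : ℕ) : ℤ) + (m : ℤ) - 1) r) * iteratedDeriv r g (actSL γ z) *
            iteratedDeriv (m - r) (vhat (ℓ + m)) (actSL γ z) i := by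
    simp only [Vmap, Nat.add_sub_cancel_left]
  rw [Pi.smul_apply, smul_eq_mul, hVeq, mulVec_sum_comm, hLHS]
  conv_rhs => rw [← Finset.sum_range_reflect]
  simp only [Nat.add_sub_cancel]
  conv_rhs => rw [Finset.mul_sum]
  calc ∑ r ∈ Finset.range (m + 1),
        ((-1 : ℂ) ^ r * gchoose (k - ((ℓ + m : ℕ) : ℤ) + 2 * (ℓ : ℤ) + (m : ℤ) - 1) (m - r) * gchoose (-((ℓ + m : ℕ) : ℤ) + (m : ℤ) - 1) r) * iteratedDeriv r g (actSL γ z) *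
          iteratedDeriv (m - r) (vhat (ℓ + m)) (actSL γ z) i
      = ∑ r ∈ Finset.range (m + 1), ∑ q ∈ Finset.range (m - r + 1), ∑ j ∈ Finset.range (r + 1),
          ((-1 : ℂ) ^ r * gchoose (k - ((ℓ + m : ℕ) : ℤ) + 2 * (ℓ : ℤ) + (m : ℤ) - 1) (m - r) * gchoose (-((ℓ + m : ℕ) : ℤ) + (m : ℤ) - 1) r) * (Acoef (k - ((ℓ + m : ℕ) : ℤ) + 2 * (ℓ : ℤ)) r j * ((γ.1 1 0 : ℝ) : ℂ) ^ (r - j) * Jf γ z ^ ((k - ((ℓ + m : ℕ) : ℤ) + 2 * (ℓ : ℤ)) + (r : ℤ) + (j : ℤ)) * iteratedDeriv j g z) * (Acoef (-((ℓ + m : ℕ) : ℤ)) (m - r) q * ((γ.1 1 0 : ℝ) : ℂ) ^ (m - r - q) * Jf γ z ^ ((-((ℓ + m : ℕ) : ℤ)) + ((m - r : ℕ) : ℤ) + (q : ℤ)) * (R *ᵥ iteratedDeriv q (vhat (ℓ + m)) z) i) := by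
        refine Finset.sum_congr rfl fun r hr => ?_
        rw [hgr r z hz, hvr (m - r), Finset.mul_sum]
        refine Finset.sum_congr rfl fun q hq => ?_
        rw [Finset.mul_sum, Finset.sum_mul]
    _ = ∑ r ∈ Finset.range (m + 1), ∑ q ∈ Finset.range (m - r + 1), ∑ j ∈ Finset.range (r + 1),
          (-1 : ℂ) ^ r * ((j.factorial * q.factorial * (r - j).factorial * (m - r - q).factorial : ℕ) : ℂ)⁻¹ * (FF (k - ((ℓ + m : ℕ) : ℤ) + 2 * (ℓ : ℤ) + (m : ℤ) - 1) (m - j) * FF (-((ℓ + m : ℕ) : ℤ) + (m : ℤ) - 1) (m - q) * ((γ.1 1 0 : ℝ) : ℂ) ^ (m - j - q) * Jf γ z ^ (k - ((ℓ + m : ℕ) : ℤ) + 2 * (ℓ : ℤ) - ((ℓ + m : ℕ) : ℤ) + (m : ℤ) + ((j : ℕ) : ℤ) + ((q : ℕ) : ℤ)) * iteratedDeriv j g z * (R *ᵥ iteratedDeriv q (vhat (ℓ + m)) z) i) := by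
        refine Finset.sum_congr rfl fun r hr => Finset.sum_congr rfl fun q hq =>
          Finset.sum_congr rfl fun j hj => ?_
        have hr' : r ≤ m := by have := Finset.mem_range.1 hr; omega
        have hq' : q ≤ m - r := by have := Finset.mem_range.1 hq; omega
        have hj' : j ≤ r := by have := Finset.mem_range.1 hj; omega
        have hm1 : FF (k - ((ℓ + m : ℕ) : ℤ) + 2 * (ℓ : ℤ) + (m : ℤ) - 1) (m - j) = FF (k - ((ℓ + m : ℕ) : ℤ) + 2 * (ℓ : ℤ) + (m : ℤ) - 1) (m - r) * FF ((k - ((ℓ + m : ℕ) : ℤ) + 2 * (ℓ : ℤ) + (m : ℤ) - 1) - ((m - r : ℕ) : ℤ)) (r - j) := by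
          rw [show m - j = (m - r) + (r - j) from by omega, FF_add]
        have hm2 : FF (-((ℓ + m : ℕ) : ℤ) + (m : ℤ) - 1) (m - q) = FF (-((ℓ + m : ℕ) : ℤ) + (m : ℤ) - 1) r * FF ((-((ℓ + m : ℕ) : ℤ) + (m : ℤ) - 1) - ((r : ℕ) : ℤ)) (m - r - q) := by
          rw [show m - q = r + (m - r - q) from by omega, FF_add]
        have hcc : ((γ.1 1 0 : ℝ) : ℂ) ^ (m - j - q) = ((γ.1 1 0 : ℝ) : ℂ) ^ (r - j) * ((γ.1 1 0 : ℝ) : ℂ) ^ (m - r - q) := by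
          rw [← pow_add]
          congr 1
          omega
        have hJe : Jf γ z ^ (k - ((ℓ + m : ℕ) : ℤ) + 2 * (ℓ : ℤ) - ((ℓ + m : ℕ) : ℤ) + (m : ℤ) + ((j : ℕ) : ℤ) + ((q : ℕ) : ℤ))
            = Jf γ z ^ ((k - ((ℓ + m : ℕ) : ℤ) + 2 * (ℓ : ℤ)) + (r : ℤ) + (j : ℤ)) * Jf γ z ^ ((-((ℓ + m : ℕ) : ℤ)) + ((m - r : ℕ) : ℤ) + (q : ℤ)) := by
          rw [← zpow_add₀ hJ]
          congr 1
          omega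
        simp only [Acoef, gchoose_eq]
        rw [show ((k - ((ℓ + m : ℕ) : ℤ) + 2 * (ℓ : ℤ)) + (r : ℕ) - 1 : ℤ) = (k - ((ℓ + m : ℕ) : ℤ) + 2 * (ℓ : ℤ) + (m : ℤ) - 1) - ((m - r : ℕ) : ℤ) from by omega]
        rw [show ((-((ℓ + m : ℕ) : ℤ)) + ((m - r : ℕ) : ℤ) - 1 : ℤ) = (-((ℓ + m : ℕ) : ℤ) + (m : ℤ) - 1) - ((r : ℕ) : ℤ) from by omega]
        rw [hm1, hm2, hcc, hJe]
        have hf1 := fact_ne j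
        have hf2 := fact_ne q
        have hf3 := fact_ne (r - j)
        have hf4 := fact_ne (m - r - q)
        have hf5 := fact_ne r
        have hf6 := fact_ne (m - r)
        push_cast
        field_simp
    _ = ∑ q ∈ Finset.range (m + 1), ∑ r ∈ Finset.range (m - q + 1), ∑ j ∈ Finset.range (r + 1),
          (-1 : ℂ) ^ r * ((j.factorial * q.factorial * (r - j).factorial * (m - r - q).factorial : ℕ) : ℂ)⁻¹ * (FF (k - ((ℓ + m : ℕ) : ℤ) + 2 * (ℓ : ℤ) + (m : ℤ) - 1) (m - j) * FF (-((ℓ + m : ℕ) : ℤ) + (m : ℤ) - 1) (m - q) * ((γ.1 1 0 : ℝ) : ℂ) ^ (m - j - q) * Jf γ z ^ (k - ((ℓ + m : ℕ) : ℤ) + 2 * (ℓ : ℤ) - ((ℓ + m : ℕ) : ℤ) + (m : ℤ) + ((j : ℕ) : ℤ) + ((q : ℕ) : ℤ)) * iteratedDeriv j g z * (R *ᵥ iteratedDeriv q (vhat (ℓ + m)) z) i) := by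
        exact Finset.sum_comm' (by
          intro r q
          simp only [Finset.mem_range]
          omega)
    _ = ∑ q ∈ Finset.range (m + 1), ∑ j ∈ Finset.range (m - q + 1),
          ∑ r ∈ Finset.Ico j (m - q + 1), (-1 : ℂ) ^ r * ((j.factorial * q.factorial * (r - j).factorial * (m - r - q).factorial : ℕ) : ℂ)⁻¹ * (FF (k - ((ℓ + m : ℕ) : ℤ) + 2 * (ℓ : ℤ) + (m : ℤ) - 1) (m - j) * FF (-((ℓ + m : ℕ) : ℤ) + (m : ℤ) - 1) (m - q) * ((γ.1 1 0 : ℝ) : ℂ) ^ (m - j - q) * Jf γ z ^ (k - ((ℓ + m : ℕ) : ℤ) + 2 * (ℓ : ℤ) - ((ℓ + m : ℕ) : ℤ) + (m : ℤ) + ((j : ℕ) : ℤ) + ((q : ℕ) : ℤ)) * iteratedDeriv j g z * (R *ᵥ iteratedDeriv q (vhat (ℓ + m)) z) i) := by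
        refine Finset.sum_congr rfl fun q hq => ?_
        exact Finset.sum_comm' (by
          intro r j
          simp only [Finset.mem_range, Finset.mem_Ico]
          omega)
    _ = ∑ q ∈ Finset.range (m + 1), ∑ j ∈ Finset.range (m - q + 1),
          (-1 : ℂ) ^ j * ((j.factorial * q.factorial : ℕ) : ℂ)⁻¹ *
            (if m - j - q = 0 then 1 else 0) * (FF (k - ((ℓ + m : ℕ) : ℤ) + 2 * (ℓ : ℤ) + (m : ℤ) - 1) (m - j) * FF (-((ℓ + m : ℕ) : ℤ) + (m : ℤ) - 1) (m - q) * ((γ.1 1 0 : ℝ) : ℂ) ^ (m - j - q) * Jf γ z ^ (k - ((ℓ + m : ℕ) : ℤ) + 2 * (ℓ : ℤ) - ((ℓ + m : ℕ) : ℤ) + (m : ℤ) + ((j : ℕ) : ℤ) + ((q : ℕ) : ℤ)) * iteratedDeriv j g z * (R *ᵥ iteratedDeriv q (vhat (ℓ + m)) z) i) := by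
        refine Finset.sum_congr rfl fun q hq => Finset.sum_congr rfl fun j hj => ?_
        have hq' : q ≤ m := by have := Finset.mem_range.1 hq; omega
        have hj' : j ≤ m - q := by have := Finset.mem_range.1 hj; omega
        exact inner_collapse m j q _ (by omega)
    _ = ∑ q ∈ Finset.range (m + 1),
          (-1 : ℂ) ^ (m - q) * (((m - q).factorial * q.factorial : ℕ) : ℂ)⁻¹ *
            (FF (k - ((ℓ + m : ℕ) : ℤ) + 2 * (ℓ : ℤ) + (m : ℤ) - 1) (m - (m - q)) * FF (-((ℓ + m : ℕ) : ℤ) + (m : ℤ) - 1) (m - q) * ((γ.1 1 0 : ℝ) : ℂ) ^ (m - (m - q) - q) * Jf γ z ^ (k - ((ℓ + m : ℕ) : ℤ) + 2 * (ℓ : ℤ) - ((ℓ + m : ℕ) : ℤ) + (m : ℤ) + (((m - q) : ℕ) : ℤ) + ((q : ℕ) : ℤ)) * iteratedDeriv (m - q) g z * (R *ᵥ iteratedDeriv q (vhat (ℓ + m)) z) i) := by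
        refine Finset.sum_congr rfl fun q hq => ?_
        have hq' : q ≤ m := by have := Finset.mem_range.1 hq; omega
        rw [Finset.sum_eq_single_of_mem (m - q) (Finset.mem_range.2 (by omega))
          (fun j hjmem hne => by
            rw [if_neg (by have := Finset.mem_range.1 hjmem; omega)]
            ring)]
        rw [if_pos (by omega)]
        ring
    _ = ∑ q ∈ Finset.range (m + 1), Jf γ z ^ k *
          (((-1 : ℂ) ^ (m - q) * gchoose (k - ((ℓ + m : ℕ) : ℤ) + 2 * (ℓ : ℤ) + (m : ℤ) - 1) (m - (m - q)) * gchoose (-((ℓ + m : ℕ) : ℤ) + (m : ℤ) - 1) (m - q) *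
              iteratedDeriv (m - q) g z) *
            (R *ᵥ iteratedDeriv (m - (m - q)) (vhat (ℓ + m)) z) i) := by
        refine Finset.sum_congr rfl fun q hq => ?_
        have hq' : q ≤ m := by have := Finset.mem_range.1 hq; omega
        rw [show m - (m - q) = q from by omega]
        rw [show (k - ((ℓ + m : ℕ) : ℤ) + 2 * (ℓ : ℤ) - ((ℓ + m : ℕ) : ℤ) + (m : ℤ) + (((m - q) : ℕ) : ℤ) + ((q : ℕ) : ℤ)) = k from by omega]
        rw [Nat.sub_self, pow_zero]
        simp only [gchoose_eq]
        have hf1 := fact_ne q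
        have hf2 := fact_ne (m - q)
        push_cast
        field_simp

end

end RCAux

/-- For 0 ≤ ℓ ≤ n and g ∈ M_{k−n+2ℓ}(Γ), the bracket [g, v̂_n]_{n−ℓ}^{(k−n+2ℓ,−n)}
is a vector-valued modular form of weight k with respect to ρ_n, and the
resulting linear map 𝒱_{k,n,ℓ} : M_{k−n+2ℓ}(Γ) → M̂_k^{n+1}(Γ,ρ_n) is injective. -/
theorem Vmap_modular_and_injective (n ℓ : ℕ) (hℓ : ℓ ≤ n) (k : ℤ)
    (hk : 1 ≤ k - n + 2 * ℓ) (Γ : Subgroup SL2R)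
    (ρ : SL2R → Matrix (Fin (n + 1)) (Fin (n + 1)) ℝ)
    (hρ : ∀ (γ : SL2R) (z₁ z₂ : ℂ),
      (ρ γ).map (Complex.ofReal) *ᵥ symVec n z₁ z₂ =
        symVec n ((γ.1 0 0 : ℝ) * z₁ + (γ.1 0 1 : ℝ) * z₂)
          ((γ.1 1 0 : ℝ) * z₁ + (γ.1 1 1 : ℝ) * z₂)) :
    (∀ g : ℂ → ℂ, IsMF Γ (k - n + 2 * ℓ) g → IsVVMF Γ ρ k (Vmap n ℓ k g)) ∧
      ∀ g h : ℂ → ℂ, IsMF Γ (k - n + 2 * ℓ) g → IsMF Γ (k - n + 2 * ℓ) h →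
        (∀ z : ℂ, 0 < z.im → Vmap n ℓ k g z = Vmap n ℓ k h z) →
        ∀ z : ℂ, 0 < z.im → g z = h z := by
  obtain ⟨m, rfl⟩ : ∃ m, n = ℓ + m := ⟨n - ℓ, by omega⟩
  constructor
  · -- modularity
    intro g hg
    constructor
    · -- differentiability
      intro z0 hz0
      rw [differentiableWithinAt_pi]
      intro i
      have hcomp : (fun z => Vmap (ℓ + m) ℓ k g z i) = fun z => ∑ r ∈ Finset.range (m + 1),
          (-1 : ℂ) ^ r * gchoose (k - ((ℓ + m : ℕ) : ℤ) + 2 * (ℓ : ℤ) + (m : ℤ) - 1) (m - r) * gchoose (-((ℓ + m : ℕ) : ℤ) + (m : ℤ) - 1) r * iteratedDeriv r g z *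
            (RCAux.FF (((ℓ + m) - (i : ℕ) : ℕ) : ℤ) (m - r) * z ^ ((ℓ + m) - (i : ℕ) - (m - r))) := by
        funext z1
        simp only [Vmap, Nat.add_sub_cancel_left, RCAux.iterDeriv_vhat]
      rw [hcomp]
      have hsum : DifferentiableOn ℂ (fun z => ∑ r ∈ Finset.range (m + 1),
          (-1 : ℂ) ^ r * gchoose (k - ((ℓ + m : ℕ) : ℤ) + 2 * (ℓ : ℤ) + (m : ℤ) - 1) (m - r) * gchoose (-((ℓ + m : ℕ) : ℤ) + (m : ℤ) - 1) r * iteratedDeriv r g z *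
            (RCAux.FF (((ℓ + m) - (i : ℕ) : ℕ) : ℤ) (m - r) * z ^ ((ℓ + m) - (i : ℕ) - (m - r))))
          RCAux.U := by
        apply DifferentiableOn.fun_sum
        intro r _
        apply DifferentiableOn.mul
        · exact (RCAux.diffOn_iter hg.1 r).const_mul _
        · exact ((differentiable_pow _).const_mul _).differentiableOn
      exact hsum z0 hz0
    · -- the transformation law
      intro γ hγ z hz
      have hgt : ∀ z ∈ RCAux.U, g (actSL γ z)
          = Jf γ z ^ (k - ((ℓ + m : ℕ) : ℤ) + 2 * (ℓ : ℤ)) * g z :=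
        fun z hzU => hg.2 γ hγ z hzU
      have hR : ∀ z ∈ RCAux.U, ∀ i, vhat (ℓ + m) (actSL γ z) i
          = Jf γ z ^ (-((ℓ + m : ℕ) : ℤ)) * (((ρ γ).map Complex.ofReal) *ᵥ vhat (ℓ + m) z) i := by
        intro z hzU i
        have hJz := RCAux.Jf_ne_zero γ hzU
        have h1 := congrFun (hρ γ z 1) i
        have h2 : (((ρ γ).map Complex.ofReal) *ᵥ vhat (ℓ + m) z) i
            = (actSL γ z * Jf γ z) ^ ((ℓ + m) - (i : ℕ)) * Jf γ z ^ (i : ℕ) := by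
          rw [vhat, h1]
          simp only [symVec, mul_one]
          congr 2
          rw [actSL, div_mul_cancel₀ _ hJz]
        rw [h2]
        simp only [vhat, symVec, one_pow, mul_one]
        rw [mul_pow, mul_assoc, ← pow_add,
          show (ℓ + m) - (i : ℕ) + (i : ℕ) = ℓ + m from by omega]
        rw [show (Jf γ z) ^ (ℓ + m) = Jf γ z ^ ((ℓ + m : ℕ) : ℤ) from (zpow_natCast _ _).symm]
        have hone : Jf γ z ^ (-((ℓ + m : ℕ) : ℤ)) * Jf γ z ^ ((ℓ + m : ℕ) : ℤ) = 1 := by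
          rw [← zpow_add₀ hJz,
            show (-((ℓ + m : ℕ) : ℤ) + ((ℓ + m : ℕ) : ℤ)) = 0 from by ring, zpow_zero]
        calc actSL γ z ^ ((ℓ + m) - (i : ℕ))
            = (Jf γ z ^ (-((ℓ + m : ℕ) : ℤ)) * Jf γ z ^ ((ℓ + m : ℕ) : ℤ)) *
                actSL γ z ^ ((ℓ + m) - (i : ℕ)) := by rw [hone, one_mul]
          _ = Jf γ z ^ (-((ℓ + m : ℕ) : ℤ)) *
                (actSL γ z ^ ((ℓ + m) - (i : ℕ)) * Jf γ z ^ ((ℓ + m : ℕ) : ℤ)) := by ring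
      exact RCAux.main_component ℓ m k γ g hg.1 hgt _ hR hz
  · -- injectivity
    intro g h hg hh heq z hz
    have key : ∀ j, j ≤ m → ∀ z ∈ RCAux.U,
        iteratedDeriv (m - j) g z = iteratedDeriv (m - j) h z := by
      intro j
      induction j using Nat.strong_induction_on with
      | _ j IH =>
        intro hjm z hzU
        have hii : (ℓ + m) - j < ℓ + m + 1 := by omega
        have hVi := congrFun (heq z hzU) ⟨(ℓ + m) - j, hii⟩
        simp only [Vmap, Nat.add_sub_cancel_left, RCAux.iterDeriv_vhat] at hVi
        rw [show (ℓ + m) - ((⟨(ℓ + m) - j, hii⟩ : Fin (ℓ + m + 1)) : ℕ) = j from by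
          simp only [Fin.val_mk]; omega] at hVi
        have hzero : ∑ r ∈ Finset.range (m + 1),
            (-1 : ℂ) ^ r * gchoose (k - ((ℓ + m : ℕ) : ℤ) + 2 * (ℓ : ℤ) + (m : ℤ) - 1) (m - r) * gchoose (-((ℓ + m : ℕ) : ℤ) + (m : ℤ) - 1) r *
              (iteratedDeriv r g z - iteratedDeriv r h z) *
              (RCAux.FF (j : ℤ) (m - r) * z ^ (j - (m - r))) = 0 := by
          have hs := sub_eq_zero.2 hVi
          rw [← Finset.sum_sub_distrib] at hs
          rw [← hs]
          exact Finset.sum_congr rfl fun r _ => by ring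
        rw [Finset.sum_eq_single_of_mem (m - j) (Finset.mem_range.2 (by omega))
          (fun r hrmem hne => ?_)] at hzero
        · rw [show m - (m - j) = j from by omega] at hzero
          rw [Nat.sub_self, pow_zero, mul_one] at hzero
          have hX : gchoose (k - ((ℓ + m : ℕ) : ℤ) + 2 * (ℓ : ℤ) + (m : ℤ) - 1) j ≠ 0 := by
            apply RCAux.gchoose_ne_zero
            intro t ht
            omega
          have hY : gchoose (-((ℓ + m : ℕ) : ℤ) + (m : ℤ) - 1) (m - j) ≠ 0 := by
            apply RCAux.gchoose_ne_zero
            intro t ht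
            omega
          have hFFj : RCAux.FF (j : ℤ) j ≠ 0 := by
            apply RCAux.FF_ne_zero
            intro t ht
            omega
          have hneg : ((-1 : ℂ) ^ (m - j)) ≠ 0 := pow_ne_zero _ (by norm_num)
          have hdiff : iteratedDeriv (m - j) g z - iteratedDeriv (m - j) h z = 0 := by
            rcases mul_eq_zero.1 hzero with hz1 | hz2
            · rcases mul_eq_zero.1 hz1 with hz3 | hz4
              · rcases mul_eq_zero.1 hz3 with hz5 | hz6
                · rcases mul_eq_zero.1 hz5 with hz7 | hz8
                  · exact absurd hz7 hneg
                  · exact absurd hz8 hX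
                · exact absurd hz6 hY
              · exact hz4
            · exact absurd hz2 hFFj
          exact sub_eq_zero.1 hdiff
        · -- other terms vanish
          have hr' : r ≤ m := by have := Finset.mem_range.1 hrmem; omega
          rcases lt_or_gt_of_ne hne with hlt | hgt
          · -- r < m - j : the vhat factor vanishes
            rw [RCAux.FF_nat_zero (show j < m - r from by omega)]
            ring
          · -- r > m - j : use the induction hypothesis
            have hIH := IH (m - r) (by omega) (by omega) z hzU
            rw [show m - (m - r) = r from by omega] at hIH
            rw [hIH, sub_self]
            ring
    have hfin := key m le_rfl z hz
    simpa using hfin
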